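/- For the extended Calogero Hamiltonian (same setup, m = 3), the cubic quantity U³G = G p_u³ - 3Au p_u² P - 18A²L₀ G u² p_u + 6A³L₀ u³ P Poisson-commutes with H = ½p_u² + 3A·L + 3L₀A²u², where L, G, P are as in the m = 3 Calogero extension. -/

import Mathlib

open scoped BigOperators

/-- Canonical Poisson bracket on `T*ℝ⁴` with coordinates
`q = (u,x₁,x₂,x₃)` and momenta `p = (p_u,p₁,p₂,p₃)`. -/
noncomputable def pb4 (f g : (Fin 4 → ℝ) → (Fin 4 → ℝ) → ℝ)
    (q p : Fin 4 → ℝ) : ℝ :=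
  ∑ i : Fin 4,
    (fderiv ℝ (fun q' => f q' p) q (Pi.single i 1) *
        fderiv ℝ (fun p' => g q p') p (Pi.single i 1)
      - fderiv ℝ (fun p' => f q p') p (Pi.single i 1) *
        fderiv ℝ (fun q' => g q' p) q (Pi.single i 1))

noncomputable def pr (j : Fin 4) : (Fin 4 → ℝ) →L[ℝ] ℝ := ContinuousLinearMap.proj j

theorem hpr (q : Fin 4 → ℝ) (j : Fin 4) : HasFDerivAt (fun q' : Fin 4 → ℝ => q' j) (pr j) q :=
  (pr j).hasFDerivAt

set_option maxHeartbeats 4000000 in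
/-- For the extended three-body Calogero Hamiltonian with `m = 3`,
`H = ½p_u² + 3A·L + 3L₀A²u²`, the cubic quantity
`U³G = G p_u³ - 3Au p_u² P - 18A²L₀ G u² p_u + 6A³L₀ u³ P` Poisson-commutes with `H` on the region
where the `xᵢ` are pairwise distinct. -/
theorem calogero_extension_m3 (A L₀ k x01 x02 x03 : ℝ) (hA : A ≠ 0)
    (L H F : (Fin 4 → ℝ) → (Fin 4 → ℝ) → ℝ)
    (hL : ∀ q p, L q p =
      (1 / 2) * ((p 1) ^ 2 + (p 2) ^ 2 + (p 3) ^ 2)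
        + 3 * L₀ * ((q 1 + x01) ^ 2 + (q 2 + x02) ^ 2 + (q 3 + x03) ^ 2)
        + k * ((q 1 - q 2)⁻¹ ^ 2 + (q 1 - q 3)⁻¹ ^ 2 + (q 2 - q 3)⁻¹ ^ 2))
    (hH : ∀ q p, H q p =
      (1 / 2) * (p 0) ^ 2 + 3 * A * L q p + 3 * L₀ * A ^ 2 * (q 0) ^ 2)
    (hF : ∀ q p, F q p =
      (x01 + x02 + x03 + q 1 + q 2 + q 3) * (p 0) ^ 3
        - 3 * A * q 0 * (p 0) ^ 2 * (p 1 + p 2 + p 3)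
        - 18 * A ^ 2 * L₀ * (x01 + x02 + x03 + q 1 + q 2 + q 3) * (q 0) ^ 2 * p 0
        + 6 * A ^ 3 * L₀ * (q 0) ^ 3 * (p 1 + p 2 + p 3)) :
    ∀ q p : Fin 4 → ℝ, q 1 ≠ q 2 → q 1 ≠ q 3 → q 2 ≠ q 3 →
      pb4 H F q p = 0 := by
  intro q p h12 h13 h23
  have h12' : q 1 - q 2 ≠ 0 := sub_ne_zero.mpr h12
  have h13' : q 1 - q 3 ≠ 0 := sub_ne_zero.mpr h13
  have h23' : q 2 - q 3 ≠ 0 := sub_ne_zero.mpr h23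
  -- q-side building blocks
  have sq0 : HasFDerivAt (𝕜 := ℝ) (fun q' : Fin 4 → ℝ => (q' 0) ^ 2) _ q :=
    (hasDerivAt_pow 2 (q 0)).comp_hasFDerivAt (f := fun q' : Fin 4 → ℝ => q' 0) q (hpr q 0)
  have cube0 : HasFDerivAt (𝕜 := ℝ) (fun q' : Fin 4 → ℝ => (q' 0) ^ 3) _ q :=
    (hasDerivAt_pow 3 (q 0)).comp_hasFDerivAt (f := fun q' : Fin 4 → ℝ => q' 0) q (hpr q 0)
  have sq1 : HasFDerivAt (𝕜 := ℝ) (fun q' : Fin 4 → ℝ => (q' 1 + x01) ^ 2) _ q :=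
    (hasDerivAt_pow 2 (q 1 + x01)).comp_hasFDerivAt (f := fun q' : Fin 4 → ℝ => q' 1 + x01) q ((hpr q 1).add_const x01)
  have sq2 : HasFDerivAt (𝕜 := ℝ) (fun q' : Fin 4 → ℝ => (q' 2 + x02) ^ 2) _ q :=
    (hasDerivAt_pow 2 (q 2 + x02)).comp_hasFDerivAt (f := fun q' : Fin 4 → ℝ => q' 2 + x02) q ((hpr q 2).add_const x02)
  have sq3 : HasFDerivAt (𝕜 := ℝ) (fun q' : Fin 4 → ℝ => (q' 3 + x03) ^ 2) _ q :=
    (hasDerivAt_pow 2 (q 3 + x03)).comp_hasFDerivAt (f := fun q' : Fin 4 → ℝ => q' 3 + x03) q ((hpr q 3).add_const x03)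
  have i12 : HasFDerivAt (𝕜 := ℝ) (fun q' : Fin 4 → ℝ => (q' 1 - q' 2)⁻¹ ^ 2) _ q :=
    (hasDerivAt_pow 2 ((q 1 - q 2)⁻¹)).comp_hasFDerivAt (f := fun q' : Fin 4 → ℝ => (q' 1 - q' 2)⁻¹) q
      ((hasDerivAt_inv h12').comp_hasFDerivAt (f := fun q' : Fin 4 → ℝ => q' 1 - q' 2) q ((hpr q 1).sub (hpr q 2)))
  have i13 : HasFDerivAt (𝕜 := ℝ) (fun q' : Fin 4 → ℝ => (q' 1 - q' 3)⁻¹ ^ 2) _ q :=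
    (hasDerivAt_pow 2 ((q 1 - q 3)⁻¹)).comp_hasFDerivAt (f := fun q' : Fin 4 → ℝ => (q' 1 - q' 3)⁻¹) q
      ((hasDerivAt_inv h13').comp_hasFDerivAt (f := fun q' : Fin 4 → ℝ => q' 1 - q' 3) q ((hpr q 1).sub (hpr q 3)))
  have i23 : HasFDerivAt (𝕜 := ℝ) (fun q' : Fin 4 → ℝ => (q' 2 - q' 3)⁻¹ ^ 2) _ q :=
    (hasDerivAt_pow 2 ((q 2 - q 3)⁻¹)).comp_hasFDerivAt (f := fun q' : Fin 4 → ℝ => (q' 2 - q' 3)⁻¹) q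
      ((hasDerivAt_inv h23').comp_hasFDerivAt (f := fun q' : Fin 4 → ℝ => q' 2 - q' 3) q ((hpr q 2).sub (hpr q 3)))
  have Gq : HasFDerivAt (𝕜 := ℝ)
      (fun q' : Fin 4 → ℝ => x01 + x02 + x03 + q' 1 + q' 2 + q' 3) _ q :=
    ((((hpr q 1).const_add (x01 + x02 + x03)).add (hpr q 2)).add (hpr q 3))
  -- p-side building blocks
  have psq0 : HasFDerivAt (𝕜 := ℝ) (fun p' : Fin 4 → ℝ => (p' 0) ^ 2) _ p :=
    (hasDerivAt_pow 2 (p 0)).comp_hasFDerivAt (f := fun p' : Fin 4 → ℝ => p' 0) p (hpr p 0)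
  have pcube0 : HasFDerivAt (𝕜 := ℝ) (fun p' : Fin 4 → ℝ => (p' 0) ^ 3) _ p :=
    (hasDerivAt_pow 3 (p 0)).comp_hasFDerivAt (f := fun p' : Fin 4 → ℝ => p' 0) p (hpr p 0)
  have psq1 : HasFDerivAt (𝕜 := ℝ) (fun p' : Fin 4 → ℝ => (p' 1) ^ 2) _ p :=
    (hasDerivAt_pow 2 (p 1)).comp_hasFDerivAt (f := fun p' : Fin 4 → ℝ => p' 1) p (hpr p 1)
  have psq2 : HasFDerivAt (𝕜 := ℝ) (fun p' : Fin 4 → ℝ => (p' 2) ^ 2) _ p :=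
    (hasDerivAt_pow 2 (p 2)).comp_hasFDerivAt (f := fun p' : Fin 4 → ℝ => p' 2) p (hpr p 2)
  have psq3 : HasFDerivAt (𝕜 := ℝ) (fun p' : Fin 4 → ℝ => (p' 3) ^ 2) _ p :=
    (hasDerivAt_pow 2 (p 3)).comp_hasFDerivAt (f := fun p' : Fin 4 → ℝ => p' 3) p (hpr p 3)
  have sumP : HasFDerivAt (𝕜 := ℝ) (fun p' : Fin 4 → ℝ => p' 1 + p' 2 + p' 3) _ p :=
    ((hpr p 1).add (hpr p 2)).add (hpr p 3)
  -- H as a function of q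
  have eHq : (fun q' => H q' p) = (fun q' : Fin 4 → ℝ =>
      (1 / 2) * (p 0) ^ 2 + 3 * A * ((1 / 2) * ((p 1) ^ 2 + (p 2) ^ 2 + (p 3) ^ 2)
        + 3 * L₀ * ((q' 1 + x01) ^ 2 + (q' 2 + x02) ^ 2 + (q' 3 + x03) ^ 2)
        + k * ((q' 1 - q' 2)⁻¹ ^ 2 + (q' 1 - q' 3)⁻¹ ^ 2 + (q' 2 - q' 3)⁻¹ ^ 2))
        + 3 * L₀ * A ^ 2 * (q' 0) ^ 2) := funext fun q' => by rw [hH, hL]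
  have keyHq : HasFDerivAt (𝕜 := ℝ) (fun q' : Fin 4 → ℝ =>
      (1 / 2) * (p 0) ^ 2 + 3 * A * ((1 / 2) * ((p 1) ^ 2 + (p 2) ^ 2 + (p 3) ^ 2)
        + 3 * L₀ * ((q' 1 + x01) ^ 2 + (q' 2 + x02) ^ 2 + (q' 3 + x03) ^ 2)
        + k * ((q' 1 - q' 2)⁻¹ ^ 2 + (q' 1 - q' 3)⁻¹ ^ 2 + (q' 2 - q' 3)⁻¹ ^ 2))
        + 3 * L₀ * A ^ 2 * (q' 0) ^ 2) _ q :=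
    (((((((sq1.add sq2).add sq3).const_mul (3 * L₀)).const_add
        ((1 / 2) * ((p 1) ^ 2 + (p 2) ^ 2 + (p 3) ^ 2))).add
        (((i12.add i13).add i23).const_mul k)).const_mul (3 * A)).const_add
        ((1 / 2) * (p 0) ^ 2)).add (sq0.const_mul (3 * L₀ * A ^ 2))
  -- F as a function of q
  have eFq : (fun q' => F q' p) = (fun q' : Fin 4 → ℝ =>
      (x01 + x02 + x03 + q' 1 + q' 2 + q' 3) * (p 0) ^ 3
        - 3 * A * q' 0 * (p 0) ^ 2 * (p 1 + p 2 + p 3)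
        - 18 * A ^ 2 * L₀ * (x01 + x02 + x03 + q' 1 + q' 2 + q' 3) * (q' 0) ^ 2 * p 0
        + 6 * A ^ 3 * L₀ * (q' 0) ^ 3 * (p 1 + p 2 + p 3)) := funext fun q' => by rw [hF]
  have keyFq : HasFDerivAt (𝕜 := ℝ) (fun q' : Fin 4 → ℝ =>
      (x01 + x02 + x03 + q' 1 + q' 2 + q' 3) * (p 0) ^ 3
        - 3 * A * q' 0 * (p 0) ^ 2 * (p 1 + p 2 + p 3)
        - 18 * A ^ 2 * L₀ * (x01 + x02 + x03 + q' 1 + q' 2 + q' 3) * (q' 0) ^ 2 * p 0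
        + 6 * A ^ 3 * L₀ * (q' 0) ^ 3 * (p 1 + p 2 + p 3)) _ q :=
    (((Gq.mul_const ((p 0) ^ 3)).sub
        ((((hpr q 0).const_mul (3 * A)).mul_const ((p 0) ^ 2)).mul_const (p 1 + p 2 + p 3))).sub
        (((Gq.const_mul (18 * A ^ 2 * L₀)).mul sq0).mul_const (p 0))).add
        ((cube0.const_mul (6 * A ^ 3 * L₀)).mul_const (p 1 + p 2 + p 3))
  -- H as a function of p
  have eHp : (fun p' => H q p') = (fun p' : Fin 4 → ℝ =>
      (1 / 2) * (p' 0) ^ 2 + 3 * A * ((1 / 2) * ((p' 1) ^ 2 + (p' 2) ^ 2 + (p' 3) ^ 2)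
        + 3 * L₀ * ((q 1 + x01) ^ 2 + (q 2 + x02) ^ 2 + (q 3 + x03) ^ 2)
        + k * ((q 1 - q 2)⁻¹ ^ 2 + (q 1 - q 3)⁻¹ ^ 2 + (q 2 - q 3)⁻¹ ^ 2))
        + 3 * L₀ * A ^ 2 * (q 0) ^ 2) := funext fun p' => by rw [hH, hL]
  have tHp1 := (((psq1.add psq2).add psq3).const_mul (1 / 2 : ℝ)).add_const
    (3 * L₀ * ((q 1 + x01) ^ 2 + (q 2 + x02) ^ 2 + (q 3 + x03) ^ 2))
  have tHp2 := tHp1.add_const (k * ((q 1 - q 2)⁻¹ ^ 2 + (q 1 - q 3)⁻¹ ^ 2 + (q 2 - q 3)⁻¹ ^ 2))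
  have keyHp : HasFDerivAt (𝕜 := ℝ) (fun p' : Fin 4 → ℝ =>
      (1 / 2) * (p' 0) ^ 2 + 3 * A * ((1 / 2) * ((p' 1) ^ 2 + (p' 2) ^ 2 + (p' 3) ^ 2)
        + 3 * L₀ * ((q 1 + x01) ^ 2 + (q 2 + x02) ^ 2 + (q 3 + x03) ^ 2)
        + k * ((q 1 - q 2)⁻¹ ^ 2 + (q 1 - q 3)⁻¹ ^ 2 + (q 2 - q 3)⁻¹ ^ 2))
        + 3 * L₀ * A ^ 2 * (q 0) ^ 2) _ p :=
    ((psq0.const_mul (1 / 2)).add (tHp2.const_mul (3 * A))).add_const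
      (3 * L₀ * A ^ 2 * (q 0) ^ 2)
  -- F as a function of p
  have eFp : (fun p' => F q p') = (fun p' : Fin 4 → ℝ =>
      (x01 + x02 + x03 + q 1 + q 2 + q 3) * (p' 0) ^ 3
        - 3 * A * q 0 * (p' 0) ^ 2 * (p' 1 + p' 2 + p' 3)
        - 18 * A ^ 2 * L₀ * (x01 + x02 + x03 + q 1 + q 2 + q 3) * (q 0) ^ 2 * p' 0
        + 6 * A ^ 3 * L₀ * (q 0) ^ 3 * (p' 1 + p' 2 + p' 3)) := funext fun p' => by rw [hF]
  have keyFp : HasFDerivAt (𝕜 := ℝ) (fun p' : Fin 4 → ℝ =>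
      (x01 + x02 + x03 + q 1 + q 2 + q 3) * (p' 0) ^ 3
        - 3 * A * q 0 * (p' 0) ^ 2 * (p' 1 + p' 2 + p' 3)
        - 18 * A ^ 2 * L₀ * (x01 + x02 + x03 + q 1 + q 2 + q 3) * (q 0) ^ 2 * p' 0
        + 6 * A ^ 3 * L₀ * (q 0) ^ 3 * (p' 1 + p' 2 + p' 3)) _ p :=
    (((pcube0.const_mul (x01 + x02 + x03 + q 1 + q 2 + q 3)).sub
        ((psq0.const_mul (3 * A * q 0)).mul sumP)).sub
        ((hpr p 0).const_mul
          (18 * A ^ 2 * L₀ * (x01 + x02 + x03 + q 1 + q 2 + q 3) * (q 0) ^ 2))).add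
        (sumP.const_mul (6 * A ^ 3 * L₀ * (q 0) ^ 3))
  simp only [pb4, Fin.sum_univ_four, eHq, eFq, eHp, eFp, keyHq.fderiv, keyFq.fderiv,
    keyHp.fderiv, keyFp.fderiv]
  simp only [pr, ContinuousLinearMap.add_apply, ContinuousLinearMap.sub_apply,
    ContinuousLinearMap.smul_apply, ContinuousLinearMap.proj_apply, smul_eq_mul,
    Pi.single_apply, Fin.isValue]
  simp only [eq_false (by decide : ¬ (1:Fin 4) = 0), eq_false (by decide : ¬ (2:Fin 4) = 0), eq_false (by decide : ¬ (3:Fin 4) = 0), eq_false (by decide : ¬ (0:Fin 4) = 1), eq_false (by decide : ¬ (2:Fin 4) = 1), eq_false (by decide : ¬ (3:Fin 4) = 1), eq_false (by decide : ¬ (0:Fin 4) = 2), eq_false (by decide : ¬ (1:Fin 4) = 2), eq_false (by decide : ¬ (3:Fin 4) = 2), eq_false (by decide : ¬ (0:Fin 4) = 3), eq_false (by decide : ¬ (1:Fin 4) = 3), eq_false (by decide : ¬ (2:Fin 4) = 3), if_false, if_true, reduceIte]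
  norm_num
  ring
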